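/- Let t be an eigenvalue of A of multiplicity m with ker(A−t) ∩ L = {0}. If t^- < t and F_L^j(t^-) ≤ t − t^-, then t^- − F_L^j(t^-) ≤ n_{j+m}^-(t), i.e. the lower bound skips past the eigenvalue t and bounds the (j+m)-th spectral point to the left of t. -/

import Mathlib

open scoped InnerProductSpace

variable {H : Type*} [NormedAddCommGroup H] [InnerProductSpace ℂ H] [CompleteSpace H]

/-- `Fapp A L j t` : the `j`-th min-max value of `‖(A-t)u‖/‖u‖` over
`j`-dimensional subspaces of `L`. -/
noncomputable def Fapp (A : H →L[ℂ] H) (L : Submodule ℂ H) (j : ℕ) (t : ℝ) : ℝ :=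
  sInf {r : ℝ | 0 ≤ r ∧ ∃ V : Submodule ℂ H, V ≤ L ∧ Module.finrank ℂ V = j ∧
    ∀ u ∈ V, ‖A u - (t : ℂ) • u‖ ≤ r * ‖u‖}

/-- `dd A j t` : the `j`-th min-max value of `‖(A-t)u‖/‖u‖` over all
`j`-dimensional subspaces of the space. -/
noncomputable def dd (A : H →L[ℂ] H) (j : ℕ) (t : ℝ) : ℝ :=
  sInf {r : ℝ | 0 ≤ r ∧ ∃ V : Submodule ℂ H, Module.finrank ℂ V = j ∧
    ∀ u ∈ V, ‖A u - (t : ℂ) • u‖ ≤ r * ‖u‖}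

/-- `tr 1_{[a,b]}(A) ≥ j` : there is a `j`-dimensional subspace on which the
quadratic form of `(A-a)(A-b)` is non-positive. -/
def countGeIcc (A : H →L[ℂ] H) (a b : ℝ) (j : ℕ) : Prop :=
  ∃ V : Submodule ℂ H, Module.finrank ℂ V = j ∧
    ∀ u ∈ V, (inner ℂ (A u - (a : ℂ) • u) (A u - (b : ℂ) • u) : ℂ).re ≤ 0

/-- `tr 1_{(a,b]}(A) ≥ j`. -/
def countGeIoc (A : H →L[ℂ] H) (a b : ℝ) (j : ℕ) : Prop :=
  ∃ V : Submodule ℂ H, Module.finrank ℂ V = j ∧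
    (∀ u ∈ V, (inner ℂ (A u - (a : ℂ) • u) (A u - (b : ℂ) • u) : ℂ).re ≤ 0) ∧
    V ⊓ LinearMap.ker (((A - (a : ℂ) • (1 : H →L[ℂ] H)) : H →L[ℂ] H) : H →ₗ[ℂ] H) = ⊥

/-- `tr 1_{[a,b)}(A) ≥ j`. -/
def countGeIco (A : H →L[ℂ] H) (a b : ℝ) (j : ℕ) : Prop :=
  ∃ V : Submodule ℂ H, Module.finrank ℂ V = j ∧
    (∀ u ∈ V, (inner ℂ (A u - (a : ℂ) • u) (A u - (b : ℂ) • u) : ℂ).re ≤ 0) ∧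
    V ⊓ LinearMap.ker (((A - (b : ℂ) • (1 : H →L[ℂ] H)) : H →L[ℂ] H) : H →ₗ[ℂ] H) = ⊥

/-- `nminus A j t` : the `j`-th spectral point of `A` to the left of `t`,
counting multiplicities, i.e. `sup {s < t : tr 1_{(s,t]}(A) ≥ j}`. -/
noncomputable def nminus (A : H →L[ℂ] H) (j : ℕ) (t : ℝ) : ℝ :=
  sSup {s : ℝ | s < t ∧ countGeIoc A s t j}

/-- `nplus A j t` : the `j`-th spectral point of `A` to the right of `t`. -/
noncomputable def nplus (A : H →L[ℂ] H) (j : ℕ) (t : ℝ) : ℝ :=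
  sInf {s : ℝ | t < s ∧ countGeIco A t s j}

/-- The real spectrum of `A`. -/
def specRe (A : H →L[ℂ] H) : Set ℝ := {x : ℝ | (x : ℂ) ∈ spectrum ℂ A}

set_option linter.unusedSectionVars false

-- helper: norm of orthonormal combination
private lemma onorm_sum {n : ℕ} {u : Fin n → H} (hu : Orthonormal ℂ u)
    (c : EuclideanSpace ℂ (Fin n)) : ‖∑ i, c i • u i‖ = ‖c‖ := by
  have h1 : (inner ℂ (∑ i, c i • u i) (∑ i, c i • u i) : ℂ)
      = ∑ i, (starRingEnd ℂ) (c i) * c i := by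
    rw [sum_inner]
    refine Finset.sum_congr rfl fun i _ => ?_
    rw [inner_smul_left, hu.inner_right_fintype]
  have h2 : ‖∑ i, c i • u i‖ ^ 2 = ∑ i, ‖c i‖ ^ 2 := by
    rw [← inner_self_eq_norm_sq (𝕜 := ℂ), h1]
    rw [map_sum]
    refine Finset.sum_congr rfl fun i _ => ?_
    simp [RCLike.conj_mul]
    norm_cast
  rw [EuclideanSpace.norm_eq, ← h2, Real.sqrt_sq (norm_nonneg _)]

set_option linter.unusedSectionVars false

private lemma fapp_attained (A : H →L[ℂ] H) (L : Submodule ℂ H) [FiniteDimensional ℂ L]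
    (j : ℕ) (hj : j ≤ Module.finrank ℂ L) (tm : ℝ) :
    0 ≤ Fapp A L j tm ∧ ∃ V : Submodule ℂ H, V ≤ L ∧ Module.finrank ℂ V = j ∧
      ∀ u ∈ V, ‖A u - (tm : ℂ) • u‖ ≤ Fapp A L j tm * ‖u‖ := by
  classical
  set B : H →L[ℂ] H := A - (tm : ℂ) • (1 : H →L[ℂ] H) with hB
  have hBapp : ∀ x : H, B x = A x - (tm : ℂ) • x := fun x => by
    simp [hB, ContinuousLinearMap.sub_apply, ContinuousLinearMap.smul_apply]
  set E := EuclideanSpace ℂ (Fin j) with hE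
  set T : (Fin j → H) → (E →L[ℂ] H) :=
    fun u => ∑ i, (ContinuousLinearMap.smulRightL ℂ E H (EuclideanSpace.proj i)) (B (u i))
    with hT
  have hTapp : ∀ u c, T u c = ∑ i, c i • B (u i) := by
    intro u c
    simp [hT, ContinuousLinearMap.sum_apply, ContinuousLinearMap.smulRightL,
      ContinuousLinearMap.smulRight_apply]
    rfl
  have hTlin : ∀ u (c : E), T u c = B (∑ i, c i • u i) := by
    intro u c
    rw [hTapp, map_sum]
    exact Finset.sum_congr rfl fun i _ => (map_smul B (c i) (u i)).symm
  set G : (Fin j → H) → ℝ := fun u => ‖T u‖ with hG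
  have hGcont : Continuous G := by
    apply Continuous.norm
    apply continuous_finset_sum
    intro i _
    exact (ContinuousLinearMap.smulRightL ℂ E H
      (EuclideanSpace.proj i)).continuous.comp (B.continuous.comp (continuous_apply i))
  set K : Set (Fin j → H) := {u | (∀ i, u i ∈ L) ∧ Orthonormal ℂ u} with hK
  have hLclosed : IsClosed (L : Set H) := Submodule.closed_of_finiteDimensional L
  have hKclosed : IsClosed K := by
    have : K = (⋂ i, (fun u : Fin j → H => u i) ⁻¹' (L : Set H)) ∩
        (⋂ i, ⋂ k, {u : Fin j → H |
          (inner ℂ (u i) (u k) : ℂ) = if i = k then (1:ℂ) else 0}) := by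
      ext u
      simp only [hK, Set.mem_setOf_eq, Set.mem_inter_iff, Set.mem_iInter, Set.mem_preimage,
        SetLike.mem_coe, orthonormal_iff_ite]
    rw [this]
    refine IsClosed.inter (isClosed_iInter fun i => hLclosed.preimage (continuous_apply i)) ?_
    refine isClosed_iInter fun i => isClosed_iInter fun k => ?_
    exact isClosed_eq (Continuous.inner (continuous_apply i) (continuous_apply k))
      continuous_const
  haveI : ProperSpace L := FiniteDimensional.proper ℂ L
  have hKcpt : IsCompact K := by
    have hball : IsCompact ((Subtype.val : L → H) '' Metric.closedBall (0 : L) 1) :=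
      (isCompact_closedBall (0 : L) 1).image continuous_subtype_val
    refine IsCompact.of_isClosed_subset
      (isCompact_univ_pi fun _ : Fin j => hball) hKclosed ?_
    rintro u ⟨hmem, honb⟩ 
    intro i _
    refine ⟨⟨u i, hmem i⟩, ?_, rfl⟩
    simp only [Metric.mem_closedBall, dist_zero_right]
    show ‖u i‖ ≤ 1
    exact le_of_eq (honb.1 i)
  have hKne : K.Nonempty := by
    refine ⟨fun i => ((stdOrthonormalBasis ℂ L) (Fin.castLE hj i) : H), fun i => ?_, ?_⟩
    · exact ((stdOrthonormalBasis ℂ L) (Fin.castLE hj i)).2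
    · have h1 : Orthonormal ℂ (fun i : Fin j => (stdOrthonormalBasis ℂ L) (Fin.castLE hj i)) :=
        (stdOrthonormalBasis ℂ L).orthonormal.comp _ (Fin.castLE_injective hj)
      exact h1.comp_linearIsometry L.subtypeₗᵢ
  obtain ⟨u₀, hu₀K, hmin⟩ := hKcpt.exists_isMinOn hKne hGcont.continuousOn
  have hminle : ∀ u ∈ K, G u₀ ≤ G u := fun u hu => isMinOn_iff.mp hmin u hu
  set SF := {r : ℝ | 0 ≤ r ∧ ∃ V : Submodule ℂ H, V ≤ L ∧ Module.finrank ℂ V = j ∧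
    ∀ u ∈ V, ‖A u - (tm : ℂ) • u‖ ≤ r * ‖u‖} with hSF
  have hFdef : Fapp A L j tm = sInf SF := rfl
  set V₀ := Submodule.span ℂ (Set.range u₀) with hV₀
  have hV₀L : V₀ ≤ L := Submodule.span_le.2 (by rintro x ⟨i, rfl⟩; exact hu₀K.1 i)
  have hV₀rank : Module.finrank ℂ V₀ = j := by
    rw [finrank_span_eq_card (hu₀K.2.linearIndependent)]
    simp
  have hV₀bound : ∀ x ∈ V₀, ‖A x - (tm:ℂ) • x‖ ≤ G u₀ * ‖x‖ := by
    intro x hx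
    obtain ⟨c, hc⟩ := (Submodule.mem_span_range_iff_exists_fun ℂ).1 hx
    set cE : E := WithLp.toLp 2 c with hcE
    have h1 : A x - (tm:ℂ) • x = T u₀ cE := by
      rw [hTlin, ← hBapp]
      congr 1
      exact hc.symm
    rw [h1]
    calc ‖T u₀ cE‖ ≤ ‖T u₀‖ * ‖cE‖ := (T u₀).le_opNorm cE
      _ = G u₀ * ‖x‖ := by
          rw [← hc, ← onorm_sum hu₀K.2 cE]
  have hGmem : G u₀ ∈ SF := ⟨norm_nonneg _, V₀, hV₀L, hV₀rank, hV₀bound⟩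
  have hGlb : ∀ r ∈ SF, G u₀ ≤ r := by
    rintro r ⟨hr0, V, hVL, hVrank, hVb⟩
    haveI : FiniteDimensional ℂ V := Submodule.finiteDimensional_of_le hVL
    set b := (stdOrthonormalBasis ℂ V).reindex (finCongr (by rw [hVrank])) with hb
    set u : Fin j → H := fun i => (b i : H) with hu
    have honb : Orthonormal ℂ u := b.orthonormal.comp_linearIsometry V.subtypeₗᵢ
    have huK : u ∈ K := ⟨fun i => hVL (b i).2, honb⟩
    refine le_trans (hminle u huK) ?_
    refine ContinuousLinearMap.opNorm_le_bound _ hr0 ?_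
    intro c
    rw [hTlin]
    have hmem : (∑ i, c i • u i) ∈ V :=
      Submodule.sum_mem _ fun i _ => Submodule.smul_mem _ _ (b i).2
    rw [hBapp]
    calc ‖A (∑ i, c i • u i) - (tm:ℂ) • (∑ i, c i • u i)‖
        ≤ r * ‖∑ i, c i • u i‖ := hVb _ hmem
      _ = r * ‖c‖ := by rw [onorm_sum honb c]
  have hFeq : Fapp A L j tm = G u₀ :=
    le_antisymm (csInf_le ⟨0, fun r hr => hr.1⟩ hGmem) (le_csInf ⟨_, hGmem⟩ hGlb)
  rw [hFeq]
  exact ⟨norm_nonneg _, V₀, hV₀L, hV₀rank, hV₀bound⟩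

private lemma bad_set_finite (A : H →L[ℂ] H) (V : Submodule ℂ H) [FiniteDimensional ℂ V] :
    {μ : ℝ | V ⊓ LinearMap.ker (((A - (μ : ℂ) • (1 : H →L[ℂ] H)) : H →L[ℂ] H) : H →ₗ[ℂ] H) ≠ ⊥}.Finite := by
  classical
  set S := {μ : ℝ | V ⊓ LinearMap.ker (((A - (μ : ℂ) • (1 : H →L[ℂ] H)) : H →L[ℂ] H) : H →ₗ[ℂ] H) ≠ ⊥} with hS
  have hx : ∀ μ : S, ∃ x : H, x ∈ V ∧ x ≠ 0 ∧ A x = ((μ : ℝ) : ℂ) • x := by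
    rintro ⟨μ, hμ⟩
    obtain ⟨x, hxmem, hx0⟩ := Submodule.exists_mem_ne_zero_of_ne_bot hμ
    refine ⟨x, (Submodule.mem_inf.1 hxmem).1, hx0, ?_⟩
    have := (Submodule.mem_inf.1 hxmem).2
    rw [LinearMap.mem_ker] at this
    have h2 : A x - (μ : ℂ) • x = 0 := by
      simpa [ContinuousLinearMap.sub_apply, ContinuousLinearMap.smul_apply] using this
    exact sub_eq_zero.1 h2
  choose x hxV hx0 hxeig using hx
  have hli : LinearIndependent ℂ x := by
    apply Module.End.eigenvectors_linearIndependent' (↑A : Module.End ℂ H)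
      (fun μ : S => ((μ : ℝ) : ℂ))
      (fun a b hab => Subtype.coe_injective (Complex.ofReal_injective hab))
    intro μ
    refine ⟨?_, hx0 μ⟩
    rw [Module.End.mem_eigenspace_iff]
    exact hxeig μ
  have hli2 : LinearIndependent ℂ (fun μ : S => (⟨x μ, hxV μ⟩ : V)) := by
    apply LinearIndependent.of_comp V.subtype
    exact hli
  have : Finite S := hli2.finite
  exact Set.toFinite S

set_option maxHeartbeats 1000000 in
/-- if `t` is an eigenvalue of `A` of multiplicity `m` with
`ker(A-t) ∩ L = {0}`, `t⁻ < t` and `F_L^j(t⁻) ≤ t - t⁻`, then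
`t⁻ - F_L^j(t⁻) ≤ n_{j+m}^-(t)`. -/
theorem stmt_17 (A : H →L[ℂ] H) (hA : IsSelfAdjoint A)
    (L : Submodule ℂ H) [FiniteDimensional ℂ L]
    (j : ℕ) (hj1 : 1 ≤ j) (hj : j ≤ Module.finrank ℂ L)
    (t tm : ℝ) (m : ℕ) (hm1 : 1 ≤ m)
    (hm : Module.finrank ℂ
      (LinearMap.ker (((A - (t : ℂ) • (1 : H →L[ℂ] H)) : H →L[ℂ] H) : H →ₗ[ℂ] H)) = m)
    (hker : L ⊓ LinearMap.ker (((A - (t : ℂ) • (1 : H →L[ℂ] H)) : H →L[ℂ] H) : H →ₗ[ℂ] H) = ⊥)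
    (htm : tm < t) (hF : Fapp A L j tm ≤ t - tm) :
    tm - Fapp A L j tm ≤ nminus A (j + m) t := by
  classical
  obtain ⟨hF0, V₀, hV₀L, hV₀rank, hbound⟩ := fapp_attained A L j hj tm
  set F := Fapp A L j tm with hFdef
  set K₀ := LinearMap.ker (((A - (t : ℂ) • (1 : H →L[ℂ] H)) : H →L[ℂ] H) : H →ₗ[ℂ] H) with hK₀
  haveI : FiniteDimensional ℂ K₀ :=
    FiniteDimensional.of_finrank_pos (by rw [hm]; omega)
  haveI : FiniteDimensional ℂ V₀ := Submodule.finiteDimensional_of_le hV₀L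
  set W := V₀ ⊔ K₀ with hWdef
  have hdisj : V₀ ⊓ K₀ = ⊥ := by
    rw [eq_bot_iff, ← hker]
    exact inf_le_inf_right _ hV₀L
  have hWrank : Module.finrank ℂ W = j + m := by
    have h1 := Submodule.finrank_sup_add_finrank_inf_eq V₀ K₀
    rw [hdisj, finrank_bot, hV₀rank, hm] at h1
    rw [hWdef]
    omega
  have hsym : ∀ x y : H, (inner ℂ (A x) y : ℂ) = inner ℂ x (A y) :=
    fun x y => (ContinuousLinearMap.isSelfAdjoint_iff_isSymmetric.1 hA) x y
  have hQ : ∀ s' : ℝ, s' ≤ tm - F → ∀ u ∈ W,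
      (inner ℂ (A u - (s' : ℂ) • u) (A u - (t : ℂ) • u) : ℂ).re ≤ 0 := by
    intro s' hs' u hu
    obtain ⟨v, hv, k, hk, rfl⟩ := Submodule.mem_sup.1 hu
    have hkA : A k = (t : ℂ) • k := by
      rw [hK₀, LinearMap.mem_ker] at hk
      have h2 : A k - (t : ℂ) • k = 0 := by
        simpa [ContinuousLinearMap.sub_apply, ContinuousLinearMap.smul_apply] using hk
      exact sub_eq_zero.1 h2
    set w := A v - (tm : ℂ) • v with hw
    set c : ℝ := tm - s' with hcdef
    set d : ℝ := t - tm with hddef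
    have hz : A v - (t : ℂ) • v = w - (d : ℂ) • v := by
      rw [hw, hddef]; push_cast; module
    have hz2 : A v - (s' : ℂ) • v = w + (c : ℂ) • v := by
      rw [hw, hcdef]; push_cast; module
    have e1 : A (v + k) - (t : ℂ) • (v + k) = A v - (t : ℂ) • v := by
      rw [map_add, hkA]; module
    have e2 : A (v + k) - (s' : ℂ) • (v + k)
        = (A v - (s' : ℂ) • v) + ((t : ℂ) - (s' : ℂ)) • k := by
      rw [map_add, hkA]; module
    have e3 : (inner ℂ k (A v - (t : ℂ) • v) : ℂ) = 0 := by
      rw [inner_sub_right, inner_smul_right]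
      have h4 : (inner ℂ k (A v) : ℂ) = (t : ℂ) * inner ℂ k v := by
        rw [← hsym k v, hkA, inner_smul_left, Complex.conj_ofReal]
      rw [h4]; ring
    have emain : (inner ℂ (A (v + k) - (s' : ℂ) • (v + k))
        (A (v + k) - (t : ℂ) • (v + k)) : ℂ)
        = inner ℂ (A v - (s' : ℂ) • v) (A v - (t : ℂ) • v) := by
      rw [e1, e2, inner_add_left, inner_smul_left, e3, mul_zero, add_zero]
    rw [emain, hz, hz2]
    have expand : (inner ℂ (w + (c : ℂ) • v) (w - (d : ℂ) • v) : ℂ).re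
        = ‖w‖ ^ 2 - d * (inner ℂ w v : ℂ).re + c * (inner ℂ v w : ℂ).re
          - c * d * ‖v‖ ^ 2 := by
      simp only [inner_add_left, inner_sub_right, inner_smul_left, inner_smul_right,
        Complex.conj_ofReal, Complex.sub_re, Complex.add_re, Complex.mul_re,
        Complex.ofReal_re, Complex.ofReal_im, Complex.mul_im]
      have hww : (inner ℂ w w : ℂ).re = ‖w‖ ^ 2 := by
        rw [← inner_self_eq_norm_sq (𝕜 := ℂ) w]; rfl
      have hvv : (inner ℂ v v : ℂ).re = ‖v‖ ^ 2 := by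
        rw [← inner_self_eq_norm_sq (𝕜 := ℂ) v]; rfl
      rw [hww, hvv]; ring
    rw [expand]
    have hbre : (inner ℂ w v : ℂ).re = (inner ℂ v w : ℂ).re := by
      rw [← inner_conj_symm v w, Complex.conj_re]
    rw [hbre]
    set X := ‖w‖ with hX
    set VV := ‖v‖ with hVV
    set b := (inner ℂ v w : ℂ).re with hb
    have hXF : X ≤ F * VV := hbound v hv
    have hb1 : |b| ≤ VV * X := by
      refine le_trans (Complex.abs_re_le_norm _) ?_
      exact norm_inner_le_norm v w
    have hcF : F ≤ c := by rw [hcdef]; linarith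
    have hdF : F ≤ d := by rw [hddef]; linarith [hF]
    have hVV0 : (0 : ℝ) ≤ VV := norm_nonneg v
    have hX0 : (0 : ℝ) ≤ X := norm_nonneg w
    have hXc : X ≤ c * VV := le_trans hXF (mul_le_mul_of_nonneg_right hcF hVV0)
    have hXd : X ≤ d * VV := le_trans hXF (mul_le_mul_of_nonneg_right hdF hVV0)
    have hc0 : (0 : ℝ) ≤ c := le_trans hF0 hcF
    have hd0 : (0 : ℝ) ≤ d := le_trans hF0 hdF
    obtain hb2 := abs_le.1 hb1
    rcases le_total c d with hcd | hcd
    · nlinarith [mul_nonneg (sub_nonneg.2 hXc) (by positivity : (0:ℝ) ≤ X + d * VV),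
        mul_le_mul_of_nonneg_left hb2.1 (sub_nonneg.2 hcd)]
    · nlinarith [mul_nonneg (sub_nonneg.2 hXd) (by positivity : (0:ℝ) ≤ X + c * VV),
        mul_le_mul_of_nonneg_left hb2.2 (sub_nonneg.2 hcd)]
  have hbad := bad_set_finite A W
  have hbdd : BddAbove {s : ℝ | s < t ∧ countGeIoc A s t (j + m)} :=
    ⟨t, fun x hx => le_of_lt hx.1⟩
  have key : ∀ ε > (0 : ℝ), ∃ s' ∈ {s : ℝ | s < t ∧ countGeIoc A s t (j + m)},
      tm - F - ε < s' := by
    intro ε hε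
    have hne : (Set.Ioo (tm - F - ε) (tm - F) \
        {μ : ℝ | W ⊓ LinearMap.ker (((A - (μ : ℂ) • (1 : H →L[ℂ] H)) : H →L[ℂ] H) : H →ₗ[ℂ] H) ≠ ⊥}).Nonempty :=
      ((Set.Ioo_infinite (by linarith)).diff hbad).nonempty
    obtain ⟨s', hs'⟩ := hne
    have h1 : s' < tm - F := hs'.1.2
    have h2 : tm - F - ε < s' := hs'.1.1
    have hker' : W ⊓ LinearMap.ker (((A - (s' : ℂ) • (1 : H →L[ℂ] H)) : H →L[ℂ] H) : H →ₗ[ℂ] H) = ⊥ := by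
      have h3 := hs'.2
      simp only [Set.mem_setOf_eq, not_not] at h3
      exact h3
    exact ⟨s', ⟨by linarith, W, hWrank, hQ s' (le_of_lt h1), hker'⟩, h2⟩
  by_contra hcon
  push_neg at hcon
  obtain ⟨s', hs'S, hgt⟩ := key ((tm - F) - nminus A (j + m) t) (by linarith)
  have hle : s' ≤ nminus A (j + m) t := le_csSup hbdd hs'S
  linarith
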